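/- arXiv:1812.02920 — 2 statements merged into one kernel-verified Lean document; each statement's English description precedes it below -/
import Mathlib

section
/- In the Morita context T = (Z_8, Z_8, Z_8, Z_8) with context products given by multiplication in Z_8, the right ideal U = (4Z_8, 4Z_8, Z_8, Z_8) is not a prime right ideal of T. -/
/-- A Morita context `(R,V,W,S)`: rings `R`, `S`, an `(R,S)`-bimodule `V`,
an `(S,R)`-bimodule `W`, and context products `V × W → R`, `W × V → S`
making the `2 × 2` matrix set an associative ring. -/
structure MoritaContext (R S V W : Type*) [Ring R] [Ring S]
    [AddCommGroup V] [AddCommGroup W] : Type _ where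
  smulRV : R → V → V
  smulVS : V → S → V
  smulSW : S → W → W
  smulWR : W → R → W
  mulVW : V → W → R
  mulWV : W → V → S
  smulRV_add : ∀ r v v', smulRV r (v + v') = smulRV r v + smulRV r v'
  add_smulRV : ∀ r r' v, smulRV (r + r') v = smulRV r v + smulRV r' v
  mul_smulRV : ∀ r r' v, smulRV (r * r') v = smulRV r (smulRV r' v)
  one_smulRV : ∀ v, smulRV 1 v = v
  smulVS_add : ∀ v v' s, smulVS (v + v') s = smulVS v s + smulVS v' s
  add_smulVS : ∀ v s s', smulVS v (s + s') = smulVS v s + smulVS v s'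
  mul_smulVS : ∀ v s s', smulVS v (s * s') = smulVS (smulVS v s) s'
  one_smulVS : ∀ v, smulVS v 1 = v
  smul_assocRVS : ∀ r v s, smulVS (smulRV r v) s = smulRV r (smulVS v s)
  smulSW_add : ∀ s w w', smulSW s (w + w') = smulSW s w + smulSW s w'
  add_smulSW : ∀ s s' w, smulSW (s + s') w = smulSW s w + smulSW s' w
  mul_smulSW : ∀ s s' w, smulSW (s * s') w = smulSW s (smulSW s' w)
  one_smulSW : ∀ w, smulSW 1 w = w
  smulWR_add : ∀ w w' r, smulWR (w + w') r = smulWR w r + smulWR w' r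
  add_smulWR : ∀ w r r', smulWR w (r + r') = smulWR w r + smulWR w r'
  mul_smulWR : ∀ w r r', smulWR w (r * r') = smulWR (smulWR w r) r'
  one_smulWR : ∀ w, smulWR w 1 = w
  smul_assocSWR : ∀ s w r, smulWR (smulSW s w) r = smulSW s (smulWR w r)
  mulVW_add_left : ∀ v v' w, mulVW (v + v') w = mulVW v w + mulVW v' w
  mulVW_add_right : ∀ v w w', mulVW v (w + w') = mulVW v w + mulVW v w'
  mulWV_add_left : ∀ w w' v, mulWV (w + w') v = mulWV w v + mulWV w' v
  mulWV_add_right : ∀ w v v', mulWV w (v + v') = mulWV w v + mulWV w v'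
  mulVW_smulR : ∀ r v w, mulVW (smulRV r v) w = r * mulVW v w
  mulVW_smulS : ∀ v s w, mulVW (smulVS v s) w = mulVW v (smulSW s w)
  mulVW_smulWR : ∀ v w r, mulVW v (smulWR w r) = mulVW v w * r
  mulWV_smulS : ∀ s w v, mulWV (smulSW s w) v = s * mulWV w v
  mulWV_smulR : ∀ w r v, mulWV (smulWR w r) v = mulWV w (smulRV r v)
  mulWV_smulVS : ∀ w v s, mulWV w (smulVS v s) = mulWV w v * s
  assocVWV : ∀ v w v', smulRV (mulVW v w) v' = smulVS v (mulWV w v')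
  assocWVW : ∀ w v w', smulSW (mulWV w v) w' = smulWR w (mulVW v w')

namespace MoritaContext

variable {R S V W : Type*} [Ring R] [Ring S] [AddCommGroup V] [AddCommGroup W]
variable (M : MoritaContext R S V W)

/-- The underlying set of the Morita context ring: matrices `((r,v),(w,s))`. -/
def Mat (_ : MoritaContext R S V W) : Type _ := (R × V) × (W × S)

instance : AddCommGroup M.Mat := inferInstanceAs (AddCommGroup ((R × V) × (W × S)))


@[simp] lemma add_fst_fst (a b : M.Mat) : (a + b).1.1 = a.1.1 + b.1.1 := rfl
@[simp] lemma add_fst_snd (a b : M.Mat) : (a + b).1.2 = a.1.2 + b.1.2 := rfl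
@[simp] lemma add_snd_fst (a b : M.Mat) : (a + b).2.1 = a.2.1 + b.2.1 := rfl
@[simp] lemma add_snd_snd (a b : M.Mat) : (a + b).2.2 = a.2.2 + b.2.2 := rfl
@[simp] lemma neg_fst_fst (a : M.Mat) : (-a).1.1 = -a.1.1 := rfl
@[simp] lemma neg_fst_snd (a : M.Mat) : (-a).1.2 = -a.1.2 := rfl
@[simp] lemma neg_snd_fst (a : M.Mat) : (-a).2.1 = -a.2.1 := rfl
@[simp] lemma neg_snd_snd (a : M.Mat) : (-a).2.2 = -a.2.2 := rfl
@[simp] lemma zero_fst_fst : (0 : M.Mat).1.1 = 0 := rfl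
@[simp] lemma zero_fst_snd : (0 : M.Mat).1.2 = 0 := rfl
@[simp] lemma zero_snd_fst : (0 : M.Mat).2.1 = 0 := rfl
@[simp] lemma zero_snd_snd : (0 : M.Mat).2.2 = 0 := rfl

/-- The matrix `((r,v),(w,s))` as an element of the Morita context ring. -/
def mat (r : R) (v : V) (w : W) (s : S) : M.Mat := ((r, v), (w, s))

lemma smulRV_zero (r : R) : M.smulRV r 0 = 0 := by
  have h := M.smulRV_add r 0 0
  rw [add_zero] at h
  exact (add_eq_left.mp h.symm)

lemma zero_smulRV (v : V) : M.smulRV 0 v = 0 := by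
  have h := M.add_smulRV 0 0 v
  rw [add_zero] at h
  exact (add_eq_left.mp h.symm)

lemma smulVS_zero (v : V) : M.smulVS v 0 = 0 := by
  have h := M.add_smulVS v 0 0
  rw [add_zero] at h
  exact (add_eq_left.mp h.symm)

lemma zero_smulVS (s : S) : M.smulVS 0 s = 0 := by
  have h := M.smulVS_add 0 0 s
  rw [add_zero] at h
  exact (add_eq_left.mp h.symm)

lemma smulSW_zero (s : S) : M.smulSW s 0 = 0 := by
  have h := M.smulSW_add s 0 0
  rw [add_zero] at h
  exact (add_eq_left.mp h.symm)

lemma zero_smulSW (w : W) : M.smulSW 0 w = 0 := by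
  have h := M.add_smulSW 0 0 w
  rw [add_zero] at h
  exact (add_eq_left.mp h.symm)

lemma smulWR_zero (w : W) : M.smulWR w 0 = 0 := by
  have h := M.add_smulWR w 0 0
  rw [add_zero] at h
  exact (add_eq_left.mp h.symm)

lemma zero_smulWR (r : R) : M.smulWR 0 r = 0 := by
  have h := M.smulWR_add 0 0 r
  rw [add_zero] at h
  exact (add_eq_left.mp h.symm)

lemma mulVW_zero (v : V) : M.mulVW v 0 = 0 := by
  have h := M.mulVW_add_right v 0 0
  rw [add_zero] at h
  exact (add_eq_left.mp h.symm)

lemma zero_mulVW (w : W) : M.mulVW 0 w = 0 := by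
  have h := M.mulVW_add_left 0 0 w
  rw [add_zero] at h
  exact (add_eq_left.mp h.symm)

lemma mulWV_zero (w : W) : M.mulWV w 0 = 0 := by
  have h := M.mulWV_add_right w 0 0
  rw [add_zero] at h
  exact (add_eq_left.mp h.symm)

lemma zero_mulWV (v : V) : M.mulWV 0 v = 0 := by
  have h := M.mulWV_add_left 0 0 v
  rw [add_zero] at h
  exact (add_eq_left.mp h.symm)


lemma mat_ext {a b : M.Mat} (h1 : a.1.1 = b.1.1) (h2 : a.1.2 = b.1.2)
    (h3 : a.2.1 = b.2.1) (h4 : a.2.2 = b.2.2) : a = b :=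
  Prod.ext (Prod.ext h1 h2) (Prod.ext h3 h4)

/-- Multiplication in the Morita context ring. -/
def matMul (a b : M.Mat) : M.Mat :=
  ((a.1.1 * b.1.1 + M.mulVW a.1.2 b.2.1, M.smulRV a.1.1 b.1.2 + M.smulVS a.1.2 b.2.2),
   (M.smulWR a.2.1 b.1.1 + M.smulSW a.2.2 b.2.1, M.mulWV a.2.1 b.1.2 + a.2.2 * b.2.2))

/-- The ring structure on the Morita context matrices. -/
instance : Ring M.Mat where
  __ := (inferInstance : AddCommGroup M.Mat)
  mul := M.matMul
  one := ((1, 0), (0, 1))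
  left_distrib a b c := by
    show M.matMul a (b + c) = M.matMul a b + M.matMul a c
    refine M.mat_ext ?_ ?_ ?_ ?_ <;>
      simp only [add_fst_fst, add_fst_snd, add_snd_fst, add_snd_snd] <;>
      simp [matMul, M.smulRV_add, M.add_smulVS, M.smulSW_add, M.add_smulWR,
        M.mulVW_add_right, M.mulWV_add_right, mul_add] <;> abel
  right_distrib a b c := by
    show M.matMul (a + b) c = M.matMul a c + M.matMul b c
    refine M.mat_ext ?_ ?_ ?_ ?_ <;>
      simp only [add_fst_fst, add_fst_snd, add_snd_fst, add_snd_snd] <;>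
      simp [matMul, M.add_smulRV, M.smulVS_add, M.add_smulSW, M.smulWR_add,
        M.mulVW_add_left, M.mulWV_add_left, add_mul] <;> abel
  zero_mul a := by
    show M.matMul 0 a = 0
    simp [matMul, M.zero_smulRV, M.zero_smulVS, M.zero_smulSW, M.zero_smulWR,
      M.zero_mulVW, M.zero_mulWV] <;> rfl
  mul_zero a := by
    show M.matMul a 0 = 0
    simp [matMul, M.smulRV_zero, M.smulVS_zero, M.smulSW_zero, M.smulWR_zero,
      M.mulVW_zero, M.mulWV_zero] <;> rfl
  mul_assoc a b c := by
    show M.matMul (M.matMul a b) c = M.matMul a (M.matMul b c)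
    refine M.mat_ext ?_ ?_ ?_ ?_ <;>
      simp [matMul, M.smulRV_add, M.add_smulRV, M.mul_smulRV, M.smulVS_add, M.add_smulVS,
        M.mul_smulVS, M.smul_assocRVS, M.smulSW_add, M.add_smulSW, M.mul_smulSW,
        M.smulWR_add, M.add_smulWR, M.mul_smulWR, M.smul_assocSWR,
        M.mulVW_add_left, M.mulVW_add_right, M.mulWV_add_left, M.mulWV_add_right,
        M.mulVW_smulR, M.mulVW_smulS, M.mulVW_smulWR, M.mulWV_smulS, M.mulWV_smulR,
        M.mulWV_smulVS, M.assocVWV, M.assocWVW, mul_add, add_mul, mul_assoc] <;> abel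
  one_mul a := by
    show M.matMul ((1, 0), (0, 1)) a = a
    simp [matMul, M.one_smulRV, M.one_smulSW, M.zero_smulVS, M.zero_smulWR,
      M.zero_mulVW, M.zero_mulWV] <;> rfl
  mul_one a := by
    show M.matMul a ((1, 0), (0, 1)) = a
    simp [matMul, M.one_smulVS, M.one_smulWR, M.smulRV_zero, M.smulSW_zero,
      M.mulVW_zero, M.mulWV_zero] <;> rfl

/-- The "rectangular" subset `(I, V₁, W₁, J)` of the Morita context ring. -/
def rect (I : Set R) (V₁ : Set V) (W₁ : Set W) (J : Set S) : Set M.Mat :=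
  {t | t.1.1 ∈ I ∧ t.1.2 ∈ V₁ ∧ t.2.1 ∈ W₁ ∧ t.2.2 ∈ J}

end MoritaContext

/-- A subset of a ring is a right ideal. -/
def IsRightIdealSet {A : Type*} [Ring A] (U : Set A) : Prop :=
  (0 : A) ∈ U ∧ (∀ a ∈ U, ∀ b ∈ U, a + b ∈ U) ∧ (∀ a ∈ U, -a ∈ U) ∧
    ∀ a ∈ U, ∀ t : A, a * t ∈ U

/-- A subset of a ring is a two-sided ideal. -/
def IsIdealSet {A : Type*} [Ring A] (U : Set A) : Prop :=
  (0 : A) ∈ U ∧ (∀ a ∈ U, ∀ b ∈ U, a + b ∈ U) ∧ (∀ a ∈ U, -a ∈ U) ∧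
    (∀ a ∈ U, ∀ t : A, a * t ∈ U) ∧ ∀ a ∈ U, ∀ t : A, t * a ∈ U

/-- A proper two-sided ideal `U` is prime if `aAb ⊆ U` implies `a ∈ U` or `b ∈ U`. -/
def IsPrimeIdealSet {A : Type*} [Ring A] (U : Set A) : Prop :=
  IsIdealSet U ∧ U ≠ Set.univ ∧ ∀ a b : A, (∀ x : A, a * x * b ∈ U) → a ∈ U ∨ b ∈ U

/-- A proper two-sided ideal `U` is semiprime if `aAa ⊆ U` implies `a ∈ U`. -/
def IsSemiprimeIdealSet {A : Type*} [Ring A] (U : Set A) : Prop :=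
  IsIdealSet U ∧ U ≠ Set.univ ∧ ∀ a : A, (∀ x : A, a * x * a ∈ U) → a ∈ U

/-- A proper right ideal `U` is prime if `aAb ⊆ U` implies `a ∈ U` or `b ∈ U`. -/
def IsPrimeRightIdealSet {A : Type*} [Ring A] (U : Set A) : Prop :=
  IsRightIdealSet U ∧ U ≠ Set.univ ∧ ∀ a b : A, (∀ x : A, a * x * b ∈ U) → a ∈ U ∨ b ∈ U

/-- The prime radical of a ring: the intersection of all its prime ideals. -/
def primeRadicalSet (A : Type*) [Ring A] : Set A := ⋂₀ {U | IsPrimeIdealSet U}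

/-- A ring `A` is prime if `aAb = 0` implies `a = 0` or `b = 0`. -/
def IsPrimeRing (A : Type*) [Ring A] : Prop :=
  ∀ a b : A, (∀ x : A, a * x * b = 0) → a = 0 ∨ b = 0

/-- A ring `A` is semiprime if `aAa = 0` implies `a = 0`. -/
def IsSemiprimeRing (A : Type*) [Ring A] : Prop :=
  ∀ a : A, (∀ x : A, a * x * a = 0) → a = 0

/-- The Morita context `(A,A,A,A)` over a commutative ring with all products
given by multiplication in `A`. -/
def MoritaContext.ofComm (A : Type*) [CommRing A] : MoritaContext A A A A := by
  refine ⟨(· * ·), (· * ·), (· * ·), (· * ·), (· * ·), (· * ·), ?_, ?_, ?_, ?_, ?_, ?_, ?_, ?_, ?_, ?_, ?_, ?_, ?_, ?_, ?_, ?_, ?_, ?_, ?_, ?_, ?_, ?_, ?_, ?_, ?_, ?_, ?_, ?_, ?_, ?_⟩ <;>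
    intros <;> ring

/-- The Morita context `(A, I, J, A)` over a commutative ring `A` with ideals
`I`, `J`, all products given by multiplication in `A`. -/
def MoritaContext.ofIdeals (A : Type*) [CommRing A] (I J : Ideal A) :
    MoritaContext A A I J := by
  refine ⟨fun r v => ⟨r * v.1, I.mul_mem_left r v.2⟩,
    fun v s => ⟨v.1 * s, I.mul_mem_right s v.2⟩,
    fun s w => ⟨s * w.1, J.mul_mem_left s w.2⟩,
    fun w r => ⟨w.1 * r, J.mul_mem_right r w.2⟩,
    fun v w => v.1 * w.1, fun w v => w.1 * v.1, ?_, ?_, ?_, ?_, ?_, ?_, ?_, ?_, ?_, ?_, ?_, ?_, ?_, ?_, ?_, ?_, ?_, ?_, ?_, ?_, ?_, ?_, ?_, ?_, ?_, ?_, ?_, ?_, ?_, ?_⟩ <;>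
    intros <;> first
      | (apply Subtype.ext; push_cast; ring)
      | (push_cast; ring)

/-- Example 2.4: in the Morita context `(ℤ₈,ℤ₈,ℤ₈,ℤ₈)` the right ideal
`U = (4ℤ₈, 4ℤ₈, ℤ₈, ℤ₈)` is not a prime right ideal. -/
theorem stmt3 :
    IsRightIdealSet ((MoritaContext.ofComm (ZMod 8)).rect
      {x : ZMod 8 | ∃ y, x = 4 * y} {x : ZMod 8 | ∃ y, x = 4 * y} Set.univ Set.univ) ∧
    ¬ IsPrimeRightIdealSet ((MoritaContext.ofComm (ZMod 8)).rect
      {x : ZMod 8 | ∃ y, x = 4 * y} {x : ZMod 8 | ∃ y, x = 4 * y} Set.univ Set.univ) := by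
  have hmul : ∀ a b : (MoritaContext.ofComm (ZMod 8)).Mat,
      a * b = ((a.1.1 * b.1.1 + a.1.2 * b.2.1, a.1.1 * b.1.2 + a.1.2 * b.2.2),
        (a.2.1 * b.1.1 + a.2.2 * b.2.1, a.2.1 * b.1.2 + a.2.2 * b.2.2)) := fun a b => rfl
  have hU : IsRightIdealSet ((MoritaContext.ofComm (ZMod 8)).rect
      {x : ZMod 8 | ∃ y, x = 4 * y} {x : ZMod 8 | ∃ y, x = 4 * y} Set.univ Set.univ) := by
    refine ⟨⟨⟨0, by norm_num⟩, ⟨0, by norm_num⟩, trivial, trivial⟩, ?_, ?_, ?_⟩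
    · rintro a ⟨⟨y1, h1⟩, ⟨y2, h2⟩, -, -⟩ b ⟨⟨z1, g1⟩, ⟨z2, g2⟩, -, -⟩
      exact ⟨⟨y1 + z1, by simp only [MoritaContext.add_fst_fst, h1, g1]; ring⟩,
        ⟨y2 + z2, by simp only [MoritaContext.add_fst_snd, h2, g2]; ring⟩, trivial, trivial⟩
    · rintro a ⟨⟨y1, h1⟩, ⟨y2, h2⟩, -, -⟩
      exact ⟨⟨-y1, by simp only [MoritaContext.neg_fst_fst, h1]; ring⟩,
        ⟨-y2, by simp only [MoritaContext.neg_fst_snd, h2]; ring⟩, trivial, trivial⟩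
    · rintro a ⟨⟨y1, h1⟩, ⟨y2, h2⟩, -, -⟩ t
      rw [hmul]
      exact ⟨⟨y1 * t.1.1 + y2 * t.2.1, by simp only [h1, h2]; ring⟩,
        ⟨y1 * t.1.2 + y2 * t.2.2, by simp only [h1, h2]; ring⟩, trivial, trivial⟩
  refine ⟨hU, ?_⟩
  rintro ⟨-, -, hp⟩
  have h2 : ¬ ∃ y : ZMod 8, (2 : ZMod 8) = 4 * y := by decide
  have := hp ((MoritaContext.ofComm (ZMod 8)).mat 2 0 0 0)
    ((MoritaContext.ofComm (ZMod 8)).mat 2 0 0 0) ?_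
  · rcases this with h | h <;> exact h2 h.1
  · intro x
    rw [hmul, hmul]
    simp only [MoritaContext.mat]
    refine ⟨⟨x.1.1, by ring⟩, ⟨0, by ring⟩, trivial, trivial⟩
end

section
/- Let T = (R,V,W,S) be a Morita context with VW = R and WV = S. If I is a prime ideal of R, J is a prime ideal of S, V_1 = {v ∈ V : vW ⊆ I} = {v ∈ V : Wv ⊆ J}, and W_1 = {w ∈ W : Vw ⊆ I} = {w ∈ W : wV ⊆ J}, then (I,V_1,W_1,J) is a prime ideal of T. -/
namespace MoritaContext

section Aux
variable {R S V W : Type*} [Ring R] [Ring S] [AddCommGroup V] [AddCommGroup W]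
variable (M : MoritaContext R S V W)

lemma mul_def' (a b : M.Mat) : a * b = M.matMul a b := rfl

lemma sandwich_r (a b : M.Mat) (r : R) :
    a * M.mat r 0 0 0 * b =
      M.mat (a.1.1 * r * b.1.1) (M.smulRV (a.1.1 * r) b.1.2)
        (M.smulWR a.2.1 (r * b.1.1)) (M.mulWV a.2.1 (M.smulRV r b.1.2)) := by
  rw [mul_def', mul_def']
  refine M.mat_ext ?_ ?_ ?_ ?_ <;>
    simp [mul_def', matMul, mat, M.smulRV_zero, M.zero_smulRV, M.smulVS_zero, M.zero_smulVS,
      M.smulSW_zero, M.zero_smulSW, M.smulWR_zero, M.zero_smulWR, M.mulVW_zero, M.zero_mulVW,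
      M.mulWV_zero, M.zero_mulWV, M.mul_smulWR, M.mulWV_smulR, M.mul_smulRV]

lemma sandwich_v (a b : M.Mat) (v : V) :
    a * M.mat 0 v 0 0 * b =
      M.mat (a.1.1 * M.mulVW v b.2.1) (M.smulRV a.1.1 (M.smulVS v b.2.2))
        (M.smulSW (M.mulWV a.2.1 v) b.2.1) (M.mulWV a.2.1 v * b.2.2) := by
  rw [mul_def', mul_def']
  refine M.mat_ext ?_ ?_ ?_ ?_ <;>
    simp [mul_def', matMul, mat, M.smulRV_zero, M.zero_smulRV, M.smulVS_zero, M.zero_smulVS,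
      M.smulSW_zero, M.zero_smulSW, M.smulWR_zero, M.zero_smulWR, M.mulVW_zero, M.zero_mulVW,
      M.mulWV_zero, M.zero_mulWV, M.mulVW_smulR, M.smul_assocRVS]

lemma sandwich_w (a b : M.Mat) (w : W) :
    a * M.mat 0 0 w 0 * b =
      M.mat (M.mulVW a.1.2 w * b.1.1) (M.smulRV (M.mulVW a.1.2 w) b.1.2)
        (M.smulSW a.2.2 (M.smulWR w b.1.1)) (a.2.2 * M.mulWV w b.1.2) := by
  rw [mul_def', mul_def']
  refine M.mat_ext ?_ ?_ ?_ ?_ <;>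
    simp [mul_def', matMul, mat, M.smulRV_zero, M.zero_smulRV, M.smulVS_zero, M.zero_smulVS,
      M.smulSW_zero, M.zero_smulSW, M.smulWR_zero, M.zero_smulWR, M.mulVW_zero, M.zero_mulVW,
      M.mulWV_zero, M.zero_mulWV, M.smul_assocSWR, M.mulWV_smulS]

lemma sandwich_s (a b : M.Mat) (s : S) :
    a * M.mat 0 0 0 s * b =
      M.mat (M.mulVW a.1.2 (M.smulSW s b.2.1)) (M.smulVS a.1.2 (s * b.2.2))
        (M.smulSW a.2.2 (M.smulSW s b.2.1)) (a.2.2 * s * b.2.2) := by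
  rw [mul_def', mul_def']
  refine M.mat_ext ?_ ?_ ?_ ?_ <;>
    simp [mul_def', matMul, mat, M.smulRV_zero, M.zero_smulRV, M.smulVS_zero, M.zero_smulVS,
      M.smulSW_zero, M.zero_smulSW, M.smulWR_zero, M.zero_smulWR, M.mulVW_zero, M.zero_mulVW,
      M.mulWV_zero, M.zero_mulWV, M.mulVW_smulS, M.mul_smulVS, M.mul_smulSW, mul_assoc]

end Aux

end MoritaContext

lemma ideal_absorb {A : Type*} [Ring A] (U : Set A) (hU : IsIdealSet U) (gen : Set A)
    (hgen : AddSubgroup.closure gen = ⊤) (a : A) (h : ∀ x ∈ gen, a * x ∈ U) : a ∈ U := by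
  let K : AddSubgroup A :=
    { carrier := {x | a * x ∈ U}
      zero_mem' := by simpa using hU.1
      add_mem' := fun {x y} hx hy => by
        simpa [mul_add] using hU.2.1 _ hx _ hy
      neg_mem' := fun {x} hx => by
        simpa [mul_neg] using hU.2.2.1 _ hx }
  have hK : AddSubgroup.closure gen ≤ K := (AddSubgroup.closure_le K).mpr h
  have h1 : (1 : A) ∈ AddSubgroup.closure gen := by rw [hgen]; exact AddSubgroup.mem_top 1
  have h2 : a * 1 ∈ U := hK h1
  rwa [mul_one] at h2

variable {R S V W : Type*} [Ring R] [Ring S] [AddCommGroup V] [AddCommGroup W]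

/-- Theorem 2.7, (2) ⇒ (1): assume `VW = R` and `WV = S`.  If `I`, `J` are
prime ideals of `R`, `S` and `V₁ = {v : vW ⊆ I} = {v : Wv ⊆ J}`,
`W₁ = {w : Vw ⊆ I} = {w : wV ⊆ J}`, then the ideal `(I,V₁,W₁,J)` is a prime
ideal of the Morita context ring. -/
theorem stmt10 (M : MoritaContext R S V W)
    (hVW : AddSubgroup.closure {x : R | ∃ (v : V) (w : W), x = M.mulVW v w} = ⊤)
    (hWV : AddSubgroup.closure {x : S | ∃ (w : W) (v : V), x = M.mulWV w v} = ⊤)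
    (I : Set R) (V1 : Set V) (W1 : Set W) (J : Set S)
    (hIdeal : IsIdealSet (M.rect I V1 W1 J))
    (hI : IsPrimeIdealSet I) (hJ : IsPrimeIdealSet J)
    (hV1 : V1 = {v : V | ∀ w : W, M.mulVW v w ∈ I})
    (hV1' : V1 = {v : V | ∀ w : W, M.mulWV w v ∈ J})
    (hW1 : W1 = {w : W | ∀ v : V, M.mulVW v w ∈ I})
    (hW1' : W1 = {w : W | ∀ v : V, M.mulWV w v ∈ J}) :
    IsPrimeIdealSet (M.rect I V1 W1 J) := by
  have hV1w : ∀ v, v ∈ V1 ↔ ∀ w : W, M.mulVW v w ∈ I := fun v => by rw [hV1]; exact Iff.rfl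
  have hV1'w : ∀ v, v ∈ V1 ↔ ∀ w : W, M.mulWV w v ∈ J := fun v => by rw [hV1']; exact Iff.rfl
  have hW1w : ∀ w, w ∈ W1 ↔ ∀ v : V, M.mulVW v w ∈ I := fun w => by rw [hW1]; exact Iff.rfl
  have hW1'w : ∀ w, w ∈ W1 ↔ ∀ v : V, M.mulWV w v ∈ J := fun w => by rw [hW1']; exact Iff.rfl
  refine ⟨hIdeal, ?_, ?_⟩
  · intro h
    apply hI.2.1
    apply Set.eq_univ_of_forall
    intro r
    have hm : M.mat r 0 0 0 ∈ M.rect I V1 W1 J := by rw [h]; trivial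
    exact hm.1
  · intro a b hab
    by_cases hb : b ∈ M.rect I V1 W1 J
    · exact Or.inr hb
    · left
      have Hr : ∀ r : R, a.1.1 * r * b.1.1 ∈ I ∧ M.smulRV (a.1.1 * r) b.1.2 ∈ V1 ∧
          M.smulWR a.2.1 (r * b.1.1) ∈ W1 ∧ M.mulWV a.2.1 (M.smulRV r b.1.2) ∈ J := fun r => by
        have h := hab (M.mat r 0 0 0); rw [M.sandwich_r a b r] at h; exact h
      have Hv : ∀ v : V, a.1.1 * M.mulVW v b.2.1 ∈ I ∧ M.smulRV a.1.1 (M.smulVS v b.2.2) ∈ V1 ∧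
          M.smulSW (M.mulWV a.2.1 v) b.2.1 ∈ W1 ∧ M.mulWV a.2.1 v * b.2.2 ∈ J := fun v => by
        have h := hab (M.mat 0 v 0 0); rw [M.sandwich_v a b v] at h; exact h
      have Hw : ∀ w : W, M.mulVW a.1.2 w * b.1.1 ∈ I ∧ M.smulRV (M.mulVW a.1.2 w) b.1.2 ∈ V1 ∧
          M.smulSW a.2.2 (M.smulWR w b.1.1) ∈ W1 ∧ a.2.2 * M.mulWV w b.1.2 ∈ J := fun w => by
        have h := hab (M.mat 0 0 w 0); rw [M.sandwich_w a b w] at h; exact h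
      have Hs : ∀ s : S, M.mulVW a.1.2 (M.smulSW s b.2.1) ∈ I ∧ M.smulVS a.1.2 (s * b.2.2) ∈ V1 ∧
          M.smulSW a.2.2 (M.smulSW s b.2.1) ∈ W1 ∧ a.2.2 * s * b.2.2 ∈ J := fun s => by
        have h := hab (M.mat 0 0 0 s); rw [M.sandwich_s a b s] at h; exact h
      have hb4 : b.1.1 ∉ I ∨ b.1.2 ∉ V1 ∨ b.2.1 ∉ W1 ∨ b.2.2 ∉ J := by
        by_contra hcon
        push_neg at hcon
        exact hb ⟨hcon.1, hcon.2.1, hcon.2.2.1, hcon.2.2.2⟩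
      rcases hb4 with hb11 | hb12 | hb21 | hb22
      · -- b.1.1 ∉ I
        refine ⟨?_, ?_, ?_, ?_⟩
        · exact (hI.2.2 a.1.1 b.1.1 (fun r => (Hr r).1)).resolve_right hb11
        · rw [hV1w]; intro w
          refine (hI.2.2 _ _ (fun r => ?_)).resolve_right hb11
          have h := (Hw (M.smulWR w r)).1
          rwa [M.mulVW_smulWR] at h
        · rw [hW1w]; intro v
          refine (hI.2.2 _ _ (fun r => ?_)).resolve_right hb11
          have h := (hW1w _).mp (Hr r).2.2.1 v
          rwa [M.mulVW_smulWR, ← mul_assoc] at h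
        · have key : ∀ w : W, M.smulSW a.2.2 w ∈ W1 := by
            intro w
            rw [hW1w]; intro v'
            refine (hI.2.2 _ _ (fun r => ?_)).resolve_right hb11
            have h := (hW1w _).mp (Hw (M.smulWR w r)).2.2.1 v'
            rwa [← M.mul_smulWR, ← M.smul_assocSWR, M.mulVW_smulWR, ← mul_assoc] at h
          refine ideal_absorb J hJ.1 _ hWV a.2.2 ?_
          rintro x ⟨w, v, rfl⟩
          rw [← M.mulWV_smulS]
          exact (hW1'w _).mp (key w) v
      · -- b.1.2 ∉ V1
        have h1 : ¬ ∀ w, M.mulVW b.1.2 w ∈ I := fun h => hb12 ((hV1w _).mpr h)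
        push_neg at h1
        obtain ⟨w0, hw0⟩ := h1
        have h2 : ¬ ∀ w, M.mulWV w b.1.2 ∈ J := fun h => hb12 ((hV1'w _).mpr h)
        push_neg at h2
        obtain ⟨w0', hw0'⟩ := h2
        refine ⟨?_, ?_, ?_, ?_⟩
        · refine (hI.2.2 _ _ (fun r => ?_)).resolve_right hw0
          have h := (hV1w _).mp (Hr r).2.1 w0
          rwa [M.mulVW_smulR] at h
        · rw [hV1w]; intro w
          refine (hI.2.2 _ _ (fun r => ?_)).resolve_right hw0
          have h := (hV1w _).mp (Hw (M.smulWR w r)).2.1 w0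
          rwa [M.mulVW_smulR, M.mulVW_smulWR] at h
        · rw [hW1'w]; intro v
          refine (hJ.2.2 _ _ (fun s => ?_)).resolve_right hw0'
          have h := (Hr (M.mulVW (M.smulVS v s) w0')).2.2.2
          rwa [M.assocVWV, ← M.mul_smulVS, M.mulWV_smulVS, ← mul_assoc] at h
        · refine (hJ.2.2 _ _ (fun s => ?_)).resolve_right hw0'
          have h := (Hw (M.smulSW s w0')).2.2.2
          rwa [M.mulWV_smulS, ← mul_assoc] at h
      · -- b.2.1 ∉ W1
        have h1 : ¬ ∀ v, M.mulVW v b.2.1 ∈ I := fun h => hb21 ((hW1w _).mpr h)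
        push_neg at h1
        obtain ⟨v0, hv0⟩ := h1
        have h2 : ¬ ∀ v, M.mulWV b.2.1 v ∈ J := fun h => hb21 ((hW1'w _).mpr h)
        push_neg at h2
        obtain ⟨v0', hv0'⟩ := h2
        refine ⟨?_, ?_, ?_, ?_⟩
        · refine (hI.2.2 _ _ (fun r => ?_)).resolve_right hv0
          have h := (Hv (M.smulRV r v0)).1
          rwa [M.mulVW_smulR, ← mul_assoc] at h
        · rw [hV1w]; intro w
          refine (hI.2.2 _ _ (fun r => ?_)).resolve_right hv0
          have h := (Hs (M.mulWV (M.smulWR w r) v0)).1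
          rwa [M.assocWVW, ← M.mul_smulWR, M.mulVW_smulWR, ← mul_assoc] at h
        · rw [hW1'w]; intro v
          refine (hJ.2.2 _ _ (fun s => ?_)).resolve_right hv0'
          have h := (hW1'w _).mp (Hv (M.smulVS v s)).2.2.1 v0'
          rwa [M.mulWV_smulS, M.mulWV_smulVS] at h
        · refine (hJ.2.2 _ _ (fun s => ?_)).resolve_right hv0'
          have h := (hW1'w _).mp (Hs s).2.2.1 v0'
          rwa [← M.mul_smulSW, M.mulWV_smulS] at h
      · -- b.2.2 ∉ J
        refine ⟨?_, ?_, ?_, ?_⟩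
        · have key : ∀ v : V, M.smulRV a.1.1 v ∈ V1 := by
            intro v
            rw [hV1'w]; intro w
            refine (hJ.2.2 _ _ (fun s => ?_)).resolve_right hb22
            have h := (hV1'w _).mp (Hv (M.smulVS v s)).2.1 w
            rwa [← M.mul_smulVS, ← M.smul_assocRVS, M.mulWV_smulVS, ← mul_assoc] at h
          refine ideal_absorb I hI.1 _ hVW a.1.1 ?_
          rintro x ⟨v, w, rfl⟩
          rw [← M.mulVW_smulR]
          exact (hV1w _).mp (key v) w
        · rw [hV1'w]; intro w
          refine (hJ.2.2 _ _ (fun s => ?_)).resolve_right hb22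
          have h := (hV1'w _).mp (Hs s).2.1 w
          rwa [M.mulWV_smulVS, ← mul_assoc] at h
        · rw [hW1'w]; intro v
          refine (hJ.2.2 _ _ (fun s => ?_)).resolve_right hb22
          have h := (Hv (M.smulVS v s)).2.2.2
          rwa [M.mulWV_smulVS] at h
        · exact (hJ.2.2 _ _ (fun s => (Hs s).2.2.2)).resolve_right hb22
end
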